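/- Let ℓ : ℝ^m × ℝ^m → ℝ be differentiable and convex in its first argument, F(W,V) = (1/n)·Σ_{i=1}^n ℓ(W(x_i + V f(x_i)); y_i) for W ∈ ℝ^{m×d}, V ∈ ℝ^{d×k}, and F_lin(U) = (1/n)·Σ_{i=1}^n ℓ(U x_i; y_i). Fix W, V and U of matching dimensions with WWᵀ invertible, and define the matrix G = ( W − U ; Wᵀ(WWᵀ)⁻¹ U V ), i.e. the concatenation of the m×d matrix W − U and the d×k matrix Wᵀ(WWᵀ)⁻¹UV. Then ⟨vec(G), ∇F(W,V)⟩ ≥ F(W,V) − F_lin(U), where ∇F(W,V) is the gradient of F with respect to (vec(W), vec(V)). -/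

import Mathlib

open scoped RealInnerProductSpace
open Finset Matrix

noncomputable section

/-- Euclidean column vectors in `ℝ^d`. -/
abbrev Vec (d : ℕ) : Type := EuclideanSpace ℝ (Fin d)

/-- The concatenated parameter vector `(vec(W), vec(V))`. -/
abbrev ParamM (m d k : ℕ) : Type := EuclideanSpace ℝ ((Fin m × Fin d) ⊕ (Fin d × Fin k))

/-- Pack `(W, V)` into a single Euclidean vector. -/
def pairWVm {m d k : ℕ} (W : Matrix (Fin m) (Fin d) ℝ) (V : Matrix (Fin d) (Fin k) ℝ) :
    ParamM m d k :=
  (EuclideanSpace.equiv ((Fin m × Fin d) ⊕ (Fin d × Fin k)) ℝ).symm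
    (Sum.elim (fun p => W p.1 p.2) (fun p => V p.1 p.2))

/-- The vector-output residual-network objective
`F(W,V) = (1/n)·Σᵢ ℓ(W(xᵢ + V f(xᵢ)); yᵢ)`. -/
def netObjVec {m d k n : ℕ} (ℓ : Vec m → Vec m → ℝ) (f : Vec d → Vec k)
    (x : Fin n → Vec d) (y : Fin n → Vec m) (z : ParamM m d k) : ℝ :=
  (1 / (n : ℝ)) *
    ∑ i, ℓ ((EuclideanSpace.equiv (Fin m) ℝ).symm fun a =>
        ∑ j, z (Sum.inl (a, j)) * ((x i) j + ∑ l, z (Sum.inr (j, l)) * (f (x i)) l)) (y i)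

/-- The linear-predictor objective `F_lin(U) = (1/n)·Σᵢ ℓ(U xᵢ; yᵢ)`. -/
def linObjVec {m d n : ℕ} (ℓ : Vec m → Vec m → ℝ) (x : Fin n → Vec d) (y : Fin n → Vec m)
    (U : Matrix (Fin m) (Fin d) ℝ) : ℝ :=
  (1 / (n : ℝ)) *
    ∑ i, ℓ ((EuclideanSpace.equiv (Fin m) ℝ).symm (U.mulVec fun j => (x i) j)) (y i)

/-- First-order condition for a convex differentiable function. -/
lemma convex_first_order {E : Type*} [NormedAddCommGroup E] [NormedSpace ℝ E]
    {g : E → ℝ} (hg : ConvexOn ℝ Set.univ g) {p q : E} {D : E →L[ℝ] ℝ}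
    (hD : HasFDerivAt g D p) : g p + D (q - p) ≤ g q := by
  have hline : ConvexOn ℝ Set.univ fun t : ℝ => g (AffineMap.lineMap p q t) := by
    have := hg.comp_affineMap (AffineMap.lineMap p q (k := ℝ))
    exact this
  have hcurve : HasDerivAt (fun t : ℝ => (AffineMap.lineMap p q : ℝ →ᵃ[ℝ] E) t) (q - p) 0 := by
    simp only [AffineMap.lineMap_apply, vadd_eq_add, vsub_eq_sub]
    simpa using ((hasDerivAt_id (0 : ℝ)).smul_const (q - p)).add_const p
  have hDp : HasFDerivAt g D ((AffineMap.lineMap p q : ℝ →ᵃ[ℝ] E) 0) := by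
    simpa using hD
  have hcomp : HasDerivAt (fun t : ℝ => g ((AffineMap.lineMap p q : ℝ →ᵃ[ℝ] E) t)) (D (q - p)) 0 :=
    hDp.comp_hasDerivAt 0 hcurve
  have hslope := hline.le_slope_of_hasDerivAt (Set.mem_univ (0 : ℝ)) (Set.mem_univ 1)
    one_pos hcomp
  have h0 : (AffineMap.lineMap p q : ℝ →ᵃ[ℝ] E) 0 = p := by simp
  have h1 : (AffineMap.lineMap p q : ℝ →ᵃ[ℝ] E) 1 = q := by simp
  rw [slope_def_field] at hslope
  simp only [h0, h1] at hslope
  have : D (q - p) ≤ g q - g p := by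
    simpa using hslope
  linarith

/-- derivative of the inner network map. -/
def Dphi {m d k : ℕ} (c : Fin d → ℝ) (e : Fin k → ℝ) (z : ParamM m d k) :
    ParamM m d k →L[ℝ] Vec m :=
  (((EuclideanSpace.equiv (Fin m) ℝ).symm.toContinuousLinearMap :
      (Fin m → ℝ) →L[ℝ] Vec m)).comp
    (ContinuousLinearMap.pi fun a =>
      ∑ j, (z (Sum.inl (a, j)) • ∑ l, e l • (EuclideanSpace.proj (Sum.inr (j, l)) :
          ParamM m d k →L[ℝ] ℝ)
        + (c j + ∑ l, z (Sum.inr (j, l)) * e l) • (EuclideanSpace.proj (Sum.inl (a, j)) :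
          ParamM m d k →L[ℝ] ℝ)))

lemma hasFDerivAt_phi {m d k : ℕ} (c : Fin d → ℝ) (e : Fin k → ℝ) (z : ParamM m d k) :
    HasFDerivAt (fun z : ParamM m d k => ((EuclideanSpace.equiv (Fin m) ℝ).symm fun a =>
        ∑ j, z (Sum.inl (a, j)) * (c j + ∑ l, z (Sum.inr (j, l)) * e l) : Vec m))
      (Dphi c e z) z := by
  have hψ : HasFDerivAt (fun z : ParamM m d k => (fun a =>
      ∑ j, z (Sum.inl (a, j)) * (c j + ∑ l, z (Sum.inr (j, l)) * e l) : Fin m → ℝ))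
      (ContinuousLinearMap.pi fun a =>
        ∑ j, (z (Sum.inl (a, j)) • ∑ l, e l • (EuclideanSpace.proj (Sum.inr (j, l)) :
            ParamM m d k →L[ℝ] ℝ)
          + (c j + ∑ l, z (Sum.inr (j, l)) * e l) • (EuclideanSpace.proj (Sum.inl (a, j)) :
            ParamM m d k →L[ℝ] ℝ))) z := by
    rw [hasFDerivAt_pi']
    intro a
    rw [ContinuousLinearMap.proj_pi]
    apply HasFDerivAt.fun_sum
    intro j _
    have h1 : HasFDerivAt (fun z : ParamM m d k => z (Sum.inl (a, j)))
        (EuclideanSpace.proj (Sum.inl (a, j)) : ParamM m d k →L[ℝ] ℝ) z :=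
      (EuclideanSpace.proj (Sum.inl (a, j)) :
        ParamM m d k →L[ℝ] ℝ).hasFDerivAt
    have h2 : HasFDerivAt (fun z : ParamM m d k => c j + ∑ l, z (Sum.inr (j, l)) * e l)
        (∑ l, e l • (EuclideanSpace.proj (Sum.inr (j, l)) : ParamM m d k →L[ℝ] ℝ)) z := by
      have hs := HasFDerivAt.fun_sum (u := Finset.univ) (x := z)
        (A := fun l (z : ParamM m d k) => z (Sum.inr (j, l)) * e l)
        (A' := fun l => e l • (EuclideanSpace.proj (Sum.inr (j, l)) : ParamM m d k →L[ℝ] ℝ))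
        (fun l _ => ((EuclideanSpace.proj (Sum.inr (j, l)) :
          ParamM m d k →L[ℝ] ℝ).hasFDerivAt).mul_const (e l))
      simpa using hs.const_add (c j)
    simpa using h1.fun_mul h2
  have hcomp := (((EuclideanSpace.equiv (Fin m) ℝ).symm.toContinuousLinearMap :
      (Fin m → ℝ) →L[ℝ] Vec m).hasFDerivAt).comp z hψ
  exact hcomp

/-- Lemma 3 of the paper: `⟨vec(G), ∇F(W,V)⟩ ≥ F(W,V) − F_lin(U)` where
`G = (W − U ; Wᵀ(WWᵀ)⁻¹UV)`. -/
theorem inner_vecG_gradient_ge_vec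
    {m d k n : ℕ} (ℓ : Vec m → Vec m → ℝ) (f : Vec d → Vec k)
    (x : Fin n → Vec d) (y : Fin n → Vec m)
    (hconv : ∀ y₀ : Vec m, ConvexOn ℝ Set.univ fun p => ℓ p y₀)
    (hdiff : ∀ y₀ : Vec m, Differentiable ℝ fun p => ℓ p y₀)
    (W U : Matrix (Fin m) (Fin d) ℝ) (V : Matrix (Fin d) (Fin k) ℝ)
    (hinv : IsUnit (W * Wᵀ).det) :
    ⟪pairWVm (W - U) (Wᵀ * (W * Wᵀ)⁻¹ * U * V), gradient (netObjVec ℓ f x y) (pairWVm W V)⟫ ≥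
      netObjVec ℓ f x y (pairWVm W V) - linObjVec ℓ x y U := by
  classical
  set M : Matrix (Fin d) (Fin k) ℝ := Wᵀ * (W * Wᵀ)⁻¹ * U * V with hM
  set z : ParamM m d k := pairWVm W V with hz
  set G : ParamM m d k := pairWVm (W - U) M with hG
  have hWM : W * M = U * V := by
    rw [hM, ← Matrix.mul_assoc, ← Matrix.mul_assoc, ← Matrix.mul_assoc,
      Matrix.mul_nonsing_inv _ hinv, Matrix.one_mul]
  -- the network outputs and linear outputs
  set p : Fin n → Vec m := fun i => ((EuclideanSpace.equiv (Fin m) ℝ).symm fun a =>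
      ∑ j, z (Sum.inl (a, j)) * ((x i) j + ∑ l, z (Sum.inr (j, l)) * (f (x i)) l)) with hp
  set q : Fin n → Vec m := fun i =>
    ((EuclideanSpace.equiv (Fin m) ℝ).symm (U.mulVec fun j => (x i) j)) with hq
  set Dl : Fin n → (Vec m →L[ℝ] ℝ) := fun i => fderiv ℝ (fun v => ℓ v (y i)) (p i) with hDl
  set D : ParamM m d k →L[ℝ] ℝ :=
    (1 / (n : ℝ)) • ∑ i, (Dl i).comp (Dphi (fun j => (x i) j) (fun l => (f (x i)) l) z) with hD
  have hF : HasFDerivAt (netObjVec ℓ f x y) D z := by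
    have hsum := HasFDerivAt.fun_sum (u := Finset.univ) (x := z)
      (A := fun i (z : ParamM m d k) => ℓ ((EuclideanSpace.equiv (Fin m) ℝ).symm fun a =>
        ∑ j, z (Sum.inl (a, j)) * ((x i) j + ∑ l, z (Sum.inr (j, l)) * (f (x i)) l)) (y i))
      (A' := fun i => (Dl i).comp (Dphi (fun j => (x i) j) (fun l => (f (x i)) l) z))
      (fun i _ => by
        have h := (((hdiff (y i)) (p i)).hasFDerivAt).comp z
          (hasFDerivAt_phi (fun j => (x i) j) (fun l => (f (x i)) l) z)
        exact h)
    exact hsum.const_mul (1 / (n : ℝ))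
  have hgrad : gradient (netObjVec ℓ f x y) z = (InnerProductSpace.toDual ℝ _).symm D := by
    apply HasGradientAt.gradient
    rw [hasGradientAt_iff_hasFDerivAt]
    simpa using hF
  have hinner : ⟪G, gradient (netObjVec ℓ f x y) z⟫ = D G := by
    rw [hgrad, real_inner_comm, InnerProductSpace.toDual_symm_apply]
  -- key directional computation
  have hdir : ∀ i, Dphi (fun j => (x i) j) (fun l => (f (x i)) l) z G = p i - q i := by
    intro i
    have key : ∀ a, (∑ j, W a j * ∑ l, (f (x i)) l * M j l)
        = ∑ j, U a j * ∑ l, V j l * (f (x i)) l := by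
      intro a
      have h1 : (∑ j, W a j * ∑ l, (f (x i)) l * M j l)
          = ∑ l, (W * M) a l * (f (x i)) l := by
        simp only [Finset.mul_sum, Matrix.mul_apply, Finset.sum_mul]
        rw [Finset.sum_comm]
        apply Finset.sum_congr rfl
        intro j _
        apply Finset.sum_congr rfl
        intro l _
        ring
      have h2 : (∑ j, U a j * ∑ l, V j l * (f (x i)) l)
          = ∑ l, (U * V) a l * (f (x i)) l := by
        simp only [Finset.mul_sum, Matrix.mul_apply, Finset.sum_mul]
        rw [Finset.sum_comm]
        apply Finset.sum_congr rfl
        intro j _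
        apply Finset.sum_congr rfl
        intro l _
        ring
      rw [h1, h2, hWM]
    ext a
    have hEq : ∀ (v : Fin m → ℝ) (b : Fin m), ((EuclideanSpace.equiv (Fin m) ℝ).symm v) b = v b :=
      fun _ _ => rfl
    have hGl : ∀ a' j, G (Sum.inl (a', j)) = W a' j - U a' j := fun a' j => rfl
    have hGr : ∀ j l, G (Sum.inr (j, l)) = M j l := fun j l => rfl
    have hzl : ∀ a' j, z (Sum.inl (a', j)) = W a' j := fun a' j => rfl
    have hzr : ∀ j l, z (Sum.inr (j, l)) = V j l := fun j l => rfl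
    have hpa : (p i - q i) a = (∑ j, W a j * ((x i) j + ∑ l, V j l * (f (x i)) l))
        - ∑ j, U a j * (x i) j := by
      simp [hp, hq, Matrix.mulVec, dotProduct, hzl, hzr]
    rw [hpa]
    simp only [Dphi, ContinuousLinearMap.comp_apply, ContinuousLinearEquiv.coe_coe,
      ContinuousLinearMap.coe_coe, hEq, ContinuousLinearMap.pi_apply,
      ContinuousLinearMap.sum_apply, ContinuousLinearMap.add_apply,
      ContinuousLinearMap.smul_apply, PiLp.proj_apply, smul_eq_mul, hGl, hGr, hzl, hzr]
    rw [Finset.sum_add_distrib,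
      show (∑ j, ((x i) j + ∑ l, V j l * (f (x i)) l) * (W a j - U a j))
        = (∑ j, W a j * ((x i) j + ∑ l, V j l * (f (x i)) l)) - (∑ j, U a j * (x i) j)
          - ∑ j, U a j * ∑ l, V j l * (f (x i)) l from by
        rw [← Finset.sum_sub_distrib, ← Finset.sum_sub_distrib]
        exact Finset.sum_congr rfl fun j _ => by ring,
      key a]
    ring
  -- convexity first-order bound
  have hfo : ∀ i, ℓ (p i) (y i) - ℓ (q i) (y i) ≤ (Dl i) (p i - q i) := by
    intro i
    have h := convex_first_order (hconv (y i)) (p := p i) (q := q i)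
      (((hdiff (y i)) (p i)).hasFDerivAt)
    have hneg : (Dl i) (q i - p i) = -((Dl i) (p i - q i)) := by
      rw [← map_neg]; congr 1; abel
    rw [hDl] at *
    linarith [h, hneg.le, hneg.ge]
  -- assemble
  have hDG : D G = (1 / (n : ℝ)) * ∑ i, (Dl i) (p i - q i) := by
    rw [hD]
    simp only [ContinuousLinearMap.smul_apply, ContinuousLinearMap.sum_apply,
      ContinuousLinearMap.comp_apply, smul_eq_mul]
    congr 1
    exact Finset.sum_congr rfl fun i _ => by rw [hdir i]
  have hFz : netObjVec ℓ f x y z = (1 / (n : ℝ)) * ∑ i, ℓ (p i) (y i) := rfl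
  have hLin : linObjVec ℓ x y U = (1 / (n : ℝ)) * ∑ i, ℓ (q i) (y i) := rfl
  rw [ge_iff_le, hinner, hDG, hFz, hLin]
  have hnn : (0 : ℝ) ≤ 1 / (n : ℝ) := by positivity
  have hsum : ∑ i, (ℓ (p i) (y i) - ℓ (q i) (y i)) ≤ ∑ i, (Dl i) (p i - q i) :=
    Finset.sum_le_sum fun i _ => hfo i
  calc (1 / (n : ℝ)) * ∑ i, ℓ (p i) (y i) - (1 / (n : ℝ)) * ∑ i, ℓ (q i) (y i)
      = (1 / (n : ℝ)) * ∑ i, (ℓ (p i) (y i) - ℓ (q i) (y i)) := by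
        rw [Finset.sum_sub_distrib, mul_sub]
    _ ≤ (1 / (n : ℝ)) * ∑ i, (Dl i) (p i - q i) := mul_le_mul_of_nonneg_left hsum hnn
    _ = _ := rfl

end
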